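/- For any t ∈ ℝ and a ∈ ℝ, the limit as ε → 0+ of ∫_t^∞ cos(ar) e^{-εr} dr, taken in the sense of distributions in the variable a, equals π δ_0(a) − sin(ta)/a. Concretely, for every Schwartz function φ on ℝ, lim_{ε→0+} ∫_ℝ (∫_t^∞ cos(ar) e^{-εr} dr) φ(a) da = π φ(0) − ∫_ℝ (sin(ta)/a) φ(a) da. -/

import Mathlib

open MeasureTheory Filter Topology Real

lemma inner_eq (t : ℝ) {ε : ℝ} (hε : 0 < ε) (a : ℝ) :
    (∫ r in Set.Ioi t, Real.cos (a * r) * Real.exp (-ε * r))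
      = Real.exp (-ε * t) * (ε * Real.cos (a * t) - a * Real.sin (a * t)) / (ε ^ 2 + a ^ 2) := by
  have hden : (0:ℝ) < ε ^ 2 + a ^ 2 := by positivity
  have h0 : Tendsto (fun r => Real.exp (-ε * r)) atTop (𝓝 0) := by
    have h1 : Tendsto (fun r : ℝ => -(ε * r)) atTop atBot :=
      tendsto_neg_atTop_atBot.comp (Tendsto.const_mul_atTop hε tendsto_id)
    have h2 := Real.tendsto_exp_atBot.comp h1
    simpa [Function.comp_def, neg_mul] using h2
  set G : ℝ → ℝ := fun r =>
    Real.exp (-ε * r) * (a * Real.sin (a * r) - ε * Real.cos (a * r)) / (ε ^ 2 + a ^ 2) with hGdef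
  have hderiv : ∀ r ∈ Set.Ici t, HasDerivAt G (Real.cos (a * r) * Real.exp (-ε * r)) r := by
    intro r _
    have h1 : HasDerivAt (fun r => Real.exp (-ε * r)) (-ε * Real.exp (-ε * r)) r := by
      simpa [mul_comm] using ((hasDerivAt_id r).const_mul (-ε)).exp
    have hid : HasDerivAt (fun y : ℝ => a * y) a r := by
      simpa using (hasDerivAt_id r).const_mul a
    have hs : HasDerivAt (fun r => Real.sin (a * r)) (Real.cos (a * r) * a) r :=
      (Real.hasDerivAt_sin (a * r)).comp r hid
    have hc : HasDerivAt (fun r => Real.cos (a * r)) (-Real.sin (a * r) * a) r :=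
      (Real.hasDerivAt_cos (a * r)).comp r hid
    have h2 : HasDerivAt (fun r => a * Real.sin (a * r) - ε * Real.cos (a * r))
        (a * (Real.cos (a * r) * a) - ε * (-Real.sin (a * r) * a)) r :=
      (hs.const_mul a).sub (hc.const_mul ε)
    have h3 := (h1.mul h2).div_const (ε ^ 2 + a ^ 2)
    refine h3.congr_deriv ?_
    rw [div_eq_iff hden.ne']
    ring
  have hint : IntegrableOn (fun r => Real.cos (a * r) * Real.exp (-ε * r)) (Set.Ioi t) := by
    refine (exp_neg_integrableOn_Ioi t hε).mono' ?_ ?_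
    · exact ((Real.continuous_cos.comp (continuous_const.mul continuous_id)).mul
        (Real.continuous_exp.comp (continuous_const.mul continuous_id))).aestronglyMeasurable
    · filter_upwards with r
      rw [norm_mul, Real.norm_eq_abs, Real.norm_eq_abs, Real.abs_exp]
      calc |Real.cos (a * r)| * Real.exp (-ε * r) ≤ 1 * Real.exp (-ε * r) :=
            mul_le_mul_of_nonneg_right (Real.abs_cos_le_one _) (Real.exp_pos _).le
        _ = Real.exp (-ε * r) := one_mul _
  have hlim : Tendsto G atTop (𝓝 0) := by
    have hb : Tendsto (fun r => Real.exp (-ε * r) * ((|a| + ε) / (ε ^ 2 + a ^ 2))) atTop (𝓝 0) := by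
      simpa using h0.mul_const ((|a| + ε) / (ε ^ 2 + a ^ 2))
    refine squeeze_zero_norm (fun r => ?_) hb
    ·
      rw [hGdef]
      simp only [Real.norm_eq_abs, abs_div, abs_mul, Real.abs_exp, abs_of_pos hden, mul_div_assoc]
      gcongr
      calc |a * Real.sin (a * r) - ε * Real.cos (a * r)|
          ≤ |a * Real.sin (a * r)| + |ε * Real.cos (a * r)| := abs_sub _ _
        _ ≤ |a| * 1 + |ε| * 1 := by
            rw [abs_mul, abs_mul]
            gcongr
            · exact Real.abs_sin_le_one _
            · exact Real.abs_cos_le_one _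
        _ = |a| + ε := by rw [abs_of_pos hε]; ring
  have := integral_Ioi_of_hasDerivAt_of_tendsto' hderiv hint hlim
  rw [this, hGdef]
  field_simp
  ring

-- boundedness of a Schwartz function
lemma schwartz_bound (φ : SchwartzMap ℝ ℝ) : ∃ C : ℝ, 0 < C ∧ ∀ x, ‖φ x‖ ≤ C := by
  obtain ⟨C, hC, h⟩ := φ.decay 0 0
  exact ⟨C, hC, fun x => by simpa using h x⟩

lemma claimA (t : ℝ) (φ : SchwartzMap ℝ ℝ) :
    Tendsto (fun ε : ℝ => ∫ a : ℝ, ε * Real.cos (a * t) / (ε ^ 2 + a ^ 2) * φ a)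
      (𝓝[>] 0) (𝓝 (Real.pi * φ 0)) := by
  obtain ⟨C, hCpos, hC⟩ := schwartz_bound φ
  have key : ∀ ε : ℝ, 0 < ε →
      (∫ a : ℝ, ε * Real.cos (a * t) / (ε ^ 2 + a ^ 2) * φ a)
        = ∫ x : ℝ, Real.cos (ε * x * t) * φ (ε * x) / (1 + x ^ 2) := by
    intro ε hε
    have h1 := MeasureTheory.Measure.integral_comp_mul_left
      (fun a : ℝ => ε * Real.cos (a * t) / (ε ^ 2 + a ^ 2) * φ a) ε
    rw [abs_inv, abs_of_pos hε, smul_eq_mul] at h1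
    have h2 : (∫ a : ℝ, ε * Real.cos (a * t) / (ε ^ 2 + a ^ 2) * φ a)
        = ε * ∫ x : ℝ, ε * Real.cos (ε * x * t) / (ε ^ 2 + (ε * x) ^ 2) * φ (ε * x) := by
      rw [h1, ← mul_assoc, mul_inv_cancel₀ hε.ne', one_mul]
    rw [h2, ← integral_const_mul]
    congr 1
    funext x
    have hx : (0:ℝ) < 1 + x ^ 2 := by positivity
    field_simp
  have hTend : Tendsto (fun ε : ℝ => ∫ x : ℝ, Real.cos (ε * x * t) * φ (ε * x) / (1 + x ^ 2))
      (𝓝[>] 0) (𝓝 (∫ x : ℝ, φ 0 / (1 + x ^ 2))) := by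
    apply tendsto_integral_filter_of_dominated_convergence (bound := fun x => C / (1 + x ^ 2))
    · filter_upwards with ε
      exact (((Real.continuous_cos.comp (by continuity)).mul
        (φ.continuous.comp (by continuity))).div
        (by continuity) (fun x => by positivity)).aestronglyMeasurable
    · filter_upwards with ε
      filter_upwards with x
      have hx : (0:ℝ) < 1 + x ^ 2 := by positivity
      rw [norm_div, Real.norm_eq_abs (1 + x ^ 2), abs_of_pos hx, norm_mul]
      gcongr
      calc ‖Real.cos (ε * x * t)‖ * ‖φ (ε * x)‖ ≤ 1 * C := by
            apply mul_le_mul _ (hC _) (norm_nonneg _) zero_le_one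
            rw [Real.norm_eq_abs]; exact Real.abs_cos_le_one _
        _ = C := one_mul _
    · simpa [div_eq_mul_inv] using integrable_inv_one_add_sq.const_mul C
    · filter_upwards with x
      have hcont : ContinuousAt (fun ε : ℝ => Real.cos (ε * x * t) * φ (ε * x) / (1 + x ^ 2)) 0 := by
        apply ContinuousAt.div _ continuousAt_const (by positivity)
        exact ((Real.continuous_cos.comp (by continuity)).mul
          (φ.continuous.comp (by continuity))).continuousAt
      have := hcont.tendsto.mono_left (nhdsWithin_le_nhds (s := Set.Ioi (0:ℝ)))
      simpa using this
  have hval : (∫ x : ℝ, φ 0 / (1 + x ^ 2)) = Real.pi * φ 0 := by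
    simp_rw [div_eq_mul_inv]
    rw [integral_const_mul, integral_univ_inv_one_add_sq]
    ring
  rw [hval] at hTend
  apply hTend.congr'
  filter_upwards [self_mem_nhdsWithin] with ε hε
  exact (key ε hε).symm

lemma claimB (t : ℝ) (φ : SchwartzMap ℝ ℝ) :
    Tendsto (fun ε : ℝ => ∫ a : ℝ, a * Real.sin (a * t) / (ε ^ 2 + a ^ 2) * φ a)
      (𝓝[>] 0) (𝓝 (∫ a : ℝ, (if a = 0 then t else Real.sin (t * a) / a) * φ a)) := by
  apply tendsto_integral_filter_of_dominated_convergence (bound := fun a => |t| * ‖φ a‖)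
  · filter_upwards [self_mem_nhdsWithin] with ε hε
    rw [Set.mem_Ioi] at hε
    exact (((continuous_id.mul (Real.continuous_sin.comp (by continuity))).div
      (by continuity) (fun a => ne_of_gt (by positivity))).mul φ.continuous).aestronglyMeasurable
  · filter_upwards [self_mem_nhdsWithin] with ε hε
    rw [Set.mem_Ioi] at hε
    filter_upwards with a
    have hd : (0:ℝ) < ε ^ 2 + a ^ 2 := by positivity
    rw [norm_mul]
    gcongr ?_ * ‖φ a‖
    rw [norm_div, Real.norm_eq_abs (ε ^ 2 + a ^ 2), abs_of_pos hd, div_le_iff₀ hd,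
      Real.norm_eq_abs, abs_mul]
    calc |a| * |Real.sin (a * t)| ≤ |a| * |a * t| :=
          mul_le_mul_of_nonneg_left (Real.abs_sin_le_abs) (abs_nonneg _)
      _ = a ^ 2 * |t| := by rw [abs_mul, ← mul_assoc, abs_mul_abs_self, ← pow_two]
      _ ≤ |t| * (ε ^ 2 + a ^ 2) := by nlinarith [abs_nonneg t, sq_nonneg ε]
  · exact φ.integrable.norm.const_mul |t|
  · have h0 : ({(0:ℝ)} : Set ℝ)ᶜ ∈ ae (volume : Measure ℝ) :=
      compl_mem_ae_iff.2 (measure_singleton 0)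
    filter_upwards [h0] with a ha
    have ha' : a ≠ 0 := by simpa using ha
    have hcont : ContinuousAt (fun ε : ℝ => a * Real.sin (a * t) / (ε ^ 2 + a ^ 2) * φ a) 0 := by
      apply ContinuousAt.mul _ continuousAt_const
      apply ContinuousAt.div continuousAt_const (by fun_prop)
      simpa using pow_ne_zero 2 ha'
    have h2 := hcont.tendsto.mono_left (nhdsWithin_le_nhds (s := Set.Ioi (0:ℝ)))
    have hval : a * Real.sin (a * t) / ((0:ℝ) ^ 2 + a ^ 2) * φ a
        = (if a = 0 then t else Real.sin (t * a) / a) * φ a := by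
      rw [if_neg ha', mul_comm t a]
      field_simp
      ring
    rw [← hval]
    exact h2

/-- The distributional limit as ε → 0+ of ∫_t^∞ cos(ar) e^{-εr} dr equals
π δ₀(a) − sin(ta)/a, tested against any Schwartz function φ. -/
theorem cos_exp_limit_distribution (t : ℝ) (φ : SchwartzMap ℝ ℝ) :
    Tendsto (fun ε : ℝ =>
        ∫ a : ℝ, (∫ r in Set.Ioi t, Real.cos (a * r) * Real.exp (-ε * r)) * φ a)
      (𝓝[>] 0)
      (𝓝 (Real.pi * φ 0 - ∫ a : ℝ, (if a = 0 then t else Real.sin (t * a) / a) * φ a)) := by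
  obtain ⟨C, hCpos, hC⟩ : ∃ C : ℝ, 0 < C ∧ ∀ x, ‖φ x‖ ≤ C := by
    obtain ⟨C, hC, h⟩ := φ.decay 0 0
    exact ⟨C, hC, fun x => by simpa using h x⟩
  have hexp : Tendsto (fun ε : ℝ => Real.exp (-ε * t)) (𝓝[>] 0) (𝓝 1) := by
    have hc : ContinuousAt (fun ε : ℝ => Real.exp (-ε * t)) 0 := by fun_prop
    simpa using hc.tendsto.mono_left (nhdsWithin_le_nhds (s := Set.Ioi (0:ℝ)))
  have hmain := hexp.mul ((claimA t φ).sub (claimB t φ))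
  rw [one_mul] at hmain
  apply Tendsto.congr' _ hmain
  filter_upwards [self_mem_nhdsWithin] with ε hε
  rw [Set.mem_Ioi] at hε
  have int1 : Integrable (fun a : ℝ => ε * Real.cos (a * t) / (ε ^ 2 + a ^ 2) * φ a) := by
    refine Integrable.mono' (φ.integrable.norm.const_mul (1 / ε)) ?_ ?_
    · exact (((continuous_const.mul (Real.continuous_cos.comp (by continuity))).div
        (by continuity) (fun a => ne_of_gt (by positivity))).mul φ.continuous).aestronglyMeasurable
    · filter_upwards with a
      have hd : (0:ℝ) < ε ^ 2 + a ^ 2 := by positivity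
      rw [norm_mul]
      gcongr ?_ * ‖φ a‖
      rw [norm_div, Real.norm_eq_abs (ε ^ 2 + a ^ 2), abs_of_pos hd, div_le_iff₀ hd,
        Real.norm_eq_abs, abs_mul, abs_of_pos hε]
      calc ε * |Real.cos (a * t)| ≤ ε * 1 :=
            mul_le_mul_of_nonneg_left (Real.abs_cos_le_one _) hε.le
        _ ≤ 1 / ε * (ε ^ 2 + a ^ 2) := by
            rw [div_mul_eq_mul_div, le_div_iff₀ hε]
            nlinarith [sq_nonneg a]
  have int2 : Integrable (fun a : ℝ => a * Real.sin (a * t) / (ε ^ 2 + a ^ 2) * φ a) := by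
    refine Integrable.mono' (φ.integrable.norm.const_mul |t|) ?_ ?_
    · exact (((continuous_id.mul (Real.continuous_sin.comp (by continuity))).div
        (by continuity) (fun a => ne_of_gt (by positivity))).mul φ.continuous).aestronglyMeasurable
    · filter_upwards with a
      have hd : (0:ℝ) < ε ^ 2 + a ^ 2 := by positivity
      rw [norm_mul]
      gcongr ?_ * ‖φ a‖
      rw [norm_div, Real.norm_eq_abs (ε ^ 2 + a ^ 2), abs_of_pos hd, div_le_iff₀ hd,
        Real.norm_eq_abs, abs_mul]
      calc |a| * |Real.sin (a * t)| ≤ |a| * |a * t| :=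
            mul_le_mul_of_nonneg_left (Real.abs_sin_le_abs) (abs_nonneg _)
        _ = a ^ 2 * |t| := by rw [abs_mul, ← mul_assoc, abs_mul_abs_self, ← pow_two]
        _ ≤ |t| * (ε ^ 2 + a ^ 2) := by nlinarith [abs_nonneg t, sq_nonneg ε]
  calc Real.exp (-ε * t) * ((∫ a : ℝ, ε * Real.cos (a * t) / (ε ^ 2 + a ^ 2) * φ a)
          - ∫ a : ℝ, a * Real.sin (a * t) / (ε ^ 2 + a ^ 2) * φ a)
      = Real.exp (-ε * t) * ∫ a : ℝ, (ε * Real.cos (a * t) / (ε ^ 2 + a ^ 2) * φ a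
          - a * Real.sin (a * t) / (ε ^ 2 + a ^ 2) * φ a) := by rw [integral_sub int1 int2]
    _ = ∫ a : ℝ, Real.exp (-ε * t) * (ε * Real.cos (a * t) / (ε ^ 2 + a ^ 2) * φ a
          - a * Real.sin (a * t) / (ε ^ 2 + a ^ 2) * φ a) := (integral_const_mul _ _).symm
    _ = ∫ a : ℝ, (∫ r in Set.Ioi t, Real.cos (a * r) * Real.exp (-ε * r)) * φ a := by
        congr 1
        funext a
        rw [inner_eq t hε a]
        have hd : ε ^ 2 + a ^ 2 ≠ 0 := by positivity
        field_simp
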